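/- Let α be a nonempty finite type, x : α → ℝ with x_a > 0 for all a and Σ_a x_a = 1, and y : α → ℝ with y_a > 0 for all a. Then the function n ↦ (1−n)^{-1}·log(Σ_a x_a^n · y_a^{1−n}) of a real variable n tends to Σ_a x_a·(log y_a − log x_a) as n → 1 (along n ≠ 1). -/

import Mathlib

open Filter

/-- For positive weights `x` summing to `1` and positive `y`, the function
`n ↦ (1−n)⁻¹·log(Σ_a x_a^n · y_a^{1−n})` tends to `Σ_a x_a·(log y_a − log x_a)`
as `n → 1` along `n ≠ 1`. -/
theorem tendsto_renyi_limit {α : Type*} [Fintype α] [Nonempty α]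
    (x y : α → ℝ) (hx : ∀ a, 0 < x a) (hsum : ∑ a, x a = 1) (hy : ∀ a, 0 < y a) :
    Tendsto (fun n : ℝ => (1 - n)⁻¹ * Real.log (∑ a, x a ^ n * y a ^ (1 - n)))
      (nhdsWithin 1 {(1 : ℝ)}ᶜ)
      (nhds (∑ a, x a * (Real.log (y a) - Real.log (x a)))) := by
  set S : ℝ → ℝ := fun n => ∑ a, x a ^ n * y a ^ (1 - n) with hSdef
  have hS1 : S 1 = 1 := by
    have : S 1 = ∑ a, x a := by simp [hSdef]
    rw [this, hsum]
  have hSd : HasDerivAt S (∑ a, x a * (Real.log (x a) - Real.log (y a))) 1 := by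
    refine HasDerivAt.fun_sum fun a _ => ?_
    have h1 : HasDerivAt (fun n : ℝ => x a ^ n) (x a ^ (1 : ℝ) * Real.log (x a)) 1 :=
      (Real.hasStrictDerivAt_const_rpow (hx a) 1).hasDerivAt
    have h2 : HasDerivAt (fun n : ℝ => y a ^ (1 - n))
        (y a ^ (0 : ℝ) * Real.log (y a) * (-1)) 1 := by
      have hin : HasDerivAt (fun n : ℝ => 1 - n) (-1) 1 :=
        (hasDerivAt_id 1).const_sub 1 |>.congr_deriv (by ring)
      simpa [Function.comp_def] using ((Real.hasStrictDerivAt_const_rpow (hy a) (1 - 1)).hasDerivAt.comp 1 hin)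
    have := h1.fun_mul h2
    convert this using 1
    · rfl
    simp [Real.rpow_one]
    ring
  have hg : HasDerivAt (fun n => Real.log (S n))
      (∑ a, x a * (Real.log (x a) - Real.log (y a))) 1 := by
    have := hSd.log (by rw [hS1]; norm_num)
    simpa [hS1] using this
  have hslope := hasDerivAt_iff_tendsto_slope.mp hg
  have hneg := hslope.neg
  have heq : (fun n : ℝ => -(slope (fun n => Real.log (S n)) 1 n))
      = fun n : ℝ => (1 - n)⁻¹ * Real.log (S n) := by
    funext n
    rw [slope_def_field, hS1, Real.log_one,
      show (1 - n)⁻¹ = -(n - 1)⁻¹ by rw [neg_inv, neg_sub]]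
    ring
  have hL : -(∑ a, x a * (Real.log (x a) - Real.log (y a)))
      = ∑ a, x a * (Real.log (y a) - Real.log (x a)) := by
    rw [← Finset.sum_neg_distrib]
    exact Finset.sum_congr rfl fun a _ => by ring
  rw [heq, hL] at hneg
  exact hneg
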